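/- Let J be a strongly stable monomial ideal in A[x₀,…,xₙ] over a commutative noetherian ring A, F_J a J-marked set, and I = (F_J). Then for every degree s, I_s = ⟨F_J^{(s)}⟩ ⊕ N(J,I)_s as A-modules, where N(J,I) = I ∩ ⟨N(J)⟩. -/

import Mathlib

open MvPolynomial

noncomputable section

/-- Exponent vectors of monomials in the variables `x₀, …, xₙ`. -/
abbrev Mon (n : ℕ) : Type := Fin (n + 1) →₀ ℕ

namespace MarkedFamilies

variable {n : ℕ}

/-- The total degree of a monomial given by its exponent vector. -/
def mdeg (α : Mon n) : ℕ := α.sum fun _ e => e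

/-- A monomial ideal, identified with its (upward closed) set of monomials. -/
def IsMonomialIdeal (J : Set (Mon n)) : Prop := ∀ α ∈ J, ∀ δ : Mon n, α + δ ∈ J

/-- A strongly stable monomial ideal: a monomial ideal such that for every monomial
`x^α ∈ J`, every variable `x_j` dividing `x^α` and every `i > j`, `(x_i/x_j)·x^α ∈ J`. -/
def IsStronglyStable (J : Set (Mon n)) : Prop :=
  IsMonomialIdeal J ∧
    ∀ α ∈ J, ∀ j : Fin (n + 1), α j ≠ 0 → ∀ i : Fin (n + 1), j < i →
      α - Finsupp.single j 1 + Finsupp.single i 1 ∈ J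

/-- The minimal monomial generators `B_J` of a monomial ideal `J`. -/
def minGens (J : Set (Mon n)) : Set (Mon n) :=
  {α | α ∈ J ∧ ∀ j : Fin (n + 1), α j ≠ 0 → α - Finsupp.single j 1 ∉ J}

/-- `min x^γ ≥ max x^δ`: every variable dividing `x^γ` is at least every variable
dividing `x^δ` (vacuously true when either monomial is `1`). -/
def minGeMax (γ δ : Mon n) : Prop := ∀ i ∈ γ.support, ∀ j ∈ δ.support, j ≤ i

/-- Lexicographic order induced by `x₀ < ⋯ < xₙ`: `a <ₗₑₓ b` iff at the largest
index where they differ, `a` has the smaller exponent. -/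
def lexLt (a b : Mon n) : Prop :=
  ∃ i : Fin (n + 1), a i < b i ∧ ∀ j : Fin (n + 1), i < j → a j = b j

/-- A saturated strongly stable ideal: strongly stable and no minimal generator is
divisible by `x₀`. -/
def IsSaturatedSS (J : Set (Mon n)) : Prop :=
  IsStronglyStable J ∧ ∀ α ∈ minGens J, α 0 = 0

/-- The truncation `J_{≥ t}`: the (monomial) ideal generated by the monomials of `J`
of degree at least `t`. -/
def truncSet (J : Set (Mon n)) (t : ℕ) : Set (Mon n) := {α | α ∈ J ∧ t ≤ mdeg α}

section Ring

variable (A : Type*) [CommRing A]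

/-- `⟨N(J)⟩`: the `A`-span of the monomials not in `J`. -/
def nSpan (J : Set (Mon n)) : Submodule A (MvPolynomial (Fin (n + 1)) A) :=
  Submodule.span A {p | ∃ β : Mon n, β ∉ J ∧ p = monomial β (1 : A)}

/-- `⟨N(J)_s⟩`: the `A`-span of the monomials of degree `s` not in `J`. -/
def nSpanDeg (J : Set (Mon n)) (s : ℕ) : Submodule A (MvPolynomial (Fin (n + 1)) A) :=
  Submodule.span A {p | ∃ β : Mon n, β ∉ J ∧ mdeg β = s ∧ p = monomial β (1 : A)}

/-- `I_s`: the degree-`s` homogeneous component of an ideal, as an `A`-submodule. -/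
def idealDeg (I : Ideal (MvPolynomial (Fin (n + 1)) A)) (s : ℕ) :
    Submodule A (MvPolynomial (Fin (n + 1)) A) :=
  Submodule.restrictScalars A I ⊓ homogeneousSubmodule (Fin (n + 1)) A s

/-- `I_{≥ s}`: the ideal `⊕_{t ≥ s} I_t`, i.e. the ideal generated by the homogeneous
elements of `I` of degree at least `s`. -/
def idealGeq (I : Ideal (MvPolynomial (Fin (n + 1)) A)) (s : ℕ) :
    Ideal (MvPolynomial (Fin (n + 1)) A) :=
  Ideal.span {f | f ∈ I ∧ ∃ t : ℕ, s ≤ t ∧ f.IsHomogeneous t}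

/-- A homogeneous ideal of the polynomial ring. -/
def IsHomogIdeal (I : Ideal (MvPolynomial (Fin (n + 1)) A)) : Prop :=
  ∀ f ∈ I, ∀ s : ℕ, homogeneousComponent s f ∈ I

variable {A}

/-- A `J`-marked set: a family assigning to each minimal generator `x^α ∈ B_J` a
polynomial `f_α = x^α − Σ_{x^β ∈ N(J)_{|α|}} c_{αβ} x^β`. -/
def IsMarkedSet (J : Set (Mon n)) (F : Mon n → MvPolynomial (Fin (n + 1)) A) : Prop :=
  ∀ α ∈ minGens J, (F α).coeff α = 1 ∧
    ∀ β ∈ (F α).support, β ≠ α → β ∉ J ∧ mdeg β = mdeg α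

/-- The ideal generated by a marked set. -/
def markedIdeal (J : Set (Mon n)) (F : Mon n → MvPolynomial (Fin (n + 1)) A) :
    Ideal (MvPolynomial (Fin (n + 1)) A) :=
  Ideal.span (F '' minGens J)

/-- A `J`-marked basis: a `J`-marked set `F` with `A[x] = (F) ⊕ ⟨N(J)⟩` as `A`-modules. -/
def IsMarkedBasis (J : Set (Mon n)) (F : Mon n → MvPolynomial (Fin (n + 1)) A) : Prop :=
  IsMarkedSet J F ∧
    IsCompl (Submodule.restrictScalars A (markedIdeal J F)) (nSpan A J)

/-- `F_J^{(s)} = { x^δ f_α : deg(x^δ f_α) = s, min x^α ≥ max x^δ }`. -/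
def FSet (J : Set (Mon n)) (F : Mon n → MvPolynomial (Fin (n + 1)) A) (s : ℕ) :
    Set (MvPolynomial (Fin (n + 1)) A) :=
  {p | ∃ α δ : Mon n, α ∈ minGens J ∧ mdeg α + mdeg δ = s ∧ minGeMax α δ ∧
        p = monomial δ (1 : A) * F α}

/-- `F̂_J^{(s)} = { x^δ f_α : deg(x^δ f_α) = s, min x^α < max x^δ }`. -/
def FHatSet (J : Set (Mon n)) (F : Mon n → MvPolynomial (Fin (n + 1)) A) (s : ℕ) :
    Set (MvPolynomial (Fin (n + 1)) A) :=
  {p | ∃ α δ : Mon n, α ∈ minGens J ∧ mdeg α + mdeg δ = s ∧ ¬ minGeMax α δ ∧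
        p = monomial δ (1 : A) * F α}

/-- `SF_J^{(s)} = { x^δ f_β − x^γ f_α : x^δ f_β ∈ F̂_J^{(s)}, x^γ f_α ∈ F_J^{(s)},
x^δ x^β = x^γ x^α }`. -/
def SFSet (J : Set (Mon n)) (F : Mon n → MvPolynomial (Fin (n + 1)) A) (s : ℕ) :
    Set (MvPolynomial (Fin (n + 1)) A) :=
  {p | ∃ α γ β δ : Mon n, α ∈ minGens J ∧ β ∈ minGens J ∧
      mdeg β + mdeg δ = s ∧ ¬ minGeMax β δ ∧
      mdeg α + mdeg γ = s ∧ minGeMax α γ ∧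
      δ + β = γ + α ∧ p = monomial δ (1 : A) * F β - monomial γ (1 : A) * F α}

/-- A `(J_s)`-marked set: one marked polynomial `f̃_γ = x^γ − Σ_{x^δ ∈ N(J)_s} d_{γδ} x^δ`
for each monomial `x^γ` of degree `s` in `J`. -/
def IsTruncMarkedSet (J : Set (Mon n)) (s : ℕ)
    (f : Mon n → MvPolynomial (Fin (n + 1)) A) : Prop :=
  ∀ γ : Mon n, γ ∈ J → mdeg γ = s →
    (f γ).coeff γ = 1 ∧ ∀ β ∈ (f γ).support, β ≠ γ → β ∉ J ∧ mdeg β = s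

end Ring

/-- Index set for the generic coefficients `C_{αβ}` (`x^α ∈ B_J`, `x^β ∈ N(J)_{|α|}`). -/
abbrev CIdx (J : Set (Mon n)) : Type :=
  {p : Mon n × Mon n // p.1 ∈ minGens J ∧ p.2 ∉ J ∧ mdeg p.2 = mdeg p.1}

/-- The coefficient ring `ℤ[C]`. -/
abbrev ZC (J : Set (Mon n)) : Type := MvPolynomial (CIdx J) ℤ

/-- The generic `J`-marked set `𝓕_J = { x^α − Σ_{x^β ∈ N(J)_{|α|}} C_{αβ} x^β }`
in `ℤ[C][x]`, characterized through its coefficients. -/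
def IsGenericMarkedSet (J : Set (Mon n))
    (𝓕 : Mon n → MvPolynomial (Fin (n + 1)) (ZC J)) : Prop :=
  ∀ α : Mon n, ∀ hα : α ∈ minGens J,
    (𝓕 α).coeff α = 1 ∧
    (∀ γ : Mon n, ∀ hγ : γ ∉ J ∧ mdeg γ = mdeg α,
      (𝓕 α).coeff γ = - MvPolynomial.X ⟨(α, γ), hα, hγ.1, hγ.2⟩) ∧
    (∀ γ : Mon n, γ ≠ α → ¬(γ ∉ J ∧ mdeg γ = mdeg α) → (𝓕 α).coeff γ = 0)

/-- The ideal `𝔦_J ⊆ ℤ[C]` generated by the `x`-coefficients of all polynomials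
in `(𝓕_J) ∩ ⟨N(J)⟩`. -/
def markedCoeffIdeal (J : Set (Mon n))
    (𝓕 : Mon n → MvPolynomial (Fin (n + 1)) (ZC J)) : Ideal (ZC J) :=
  Ideal.span {c : ZC J | ∃ p : MvPolynomial (Fin (n + 1)) (ZC J),
    p ∈ markedIdeal J 𝓕 ∧ p ∈ nSpan (ZC J) J ∧ ∃ γ : Mon n, p.coeff γ = c}

/-- The evaluation homomorphism `φ_{F_J} : ℤ[C] → A`, `C_{αβ} ↦ c_{αβ}`, associated to a
`J`-marked set `F` with `f_α = x^α − Σ c_{αβ} x^β` (so `c_{αβ} = −(F α).coeff β`). -/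
noncomputable def evalHom (J : Set (Mon n)) {A : Type*} [CommRing A]
    (F : Mon n → MvPolynomial (Fin (n + 1)) A) : ZC J →+* A :=
  MvPolynomial.eval₂Hom (Int.castRingHom A) fun p => -((F p.val.1).coeff p.val.2)

/-- `x^γ` is the `σ`-leading monomial of `g` (with nonzero leading coefficient). -/
def IsLeadingMon {A : Type*} [CommRing A] (σlt : Mon n → Mon n → Prop)
    (g : MvPolynomial (Fin (n + 1)) A) (γ : Mon n) : Prop :=
  g.coeff γ ≠ 0 ∧ ∀ δ ∈ g.support, δ ≠ γ → σlt δ γ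

/-- `LC(I, x^γ)`: the set of leading coefficients at `x^γ` of elements of `I`,
together with `0`. -/
def LCset {A : Type*} [CommRing A] (σlt : Mon n → Mon n → Prop)
    (I : Ideal (MvPolynomial (Fin (n + 1)) A)) (γ : Mon n) : Set A :=
  {a | ∃ g ∈ I, IsLeadingMon σlt g γ ∧ g.coeff γ = a} ∪ {0}

/-- A monic ideal with respect to the term ordering `σ`. -/
def IsMonicIdeal {A : Type*} [CommRing A] (σlt : Mon n → Mon n → Prop)
    (I : Ideal (MvPolynomial (Fin (n + 1)) A)) : Prop :=
  ∀ γ : Mon n, LCset σlt I γ = {0} ∨ LCset σlt I γ = Set.univ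

/-- The set of `σ`-leading monomials of elements of `I` (i.e. `in_σ(I)`,
identified with its set of monomials). -/
def leadingMons {A : Type*} [CommRing A] (σlt : Mon n → Mon n → Prop)
    (I : Ideal (MvPolynomial (Fin (n + 1)) A)) : Set (Mon n) :=
  {γ | ∃ g ∈ I, IsLeadingMon σlt g γ}

end MarkedFamilies
namespace StmtAux
open MarkedFamilies Finsupp

variable {n : ℕ}

lemma mdeg_eq_sum (α : Mon n) : mdeg α = ∑ i, α i := by
  rw [mdeg, Finsupp.sum_fintype]
  intro i; rfl

lemma mdeg_add (α β : Mon n) : mdeg (α + β) = mdeg α + mdeg β := by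
  simp [mdeg_eq_sum, Finsupp.add_apply, Finset.sum_add_distrib]

lemma apply_le_mdeg (α : Mon n) (i : Fin (n+1)) : α i ≤ mdeg α := by
  rw [mdeg_eq_sum]
  exact Finset.single_le_sum (fun _ _ => Nat.zero_le _) (Finset.mem_univ i)

lemma weight_one_eq_mdeg (d : Mon n) :
    (Finsupp.weight (1 : Fin (n+1) → ℕ)) d = mdeg d := by
  simp [Finsupp.weight_apply, mdeg, Finsupp.sum]

/-- positional measure: `μ_s(δ) = Σ δ_i (s+1)^i`. -/
def mu (s : ℕ) (δ : Mon n) : ℕ :=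
  ∑ i ∈ Finset.range (n+1), (if h : i < n+1 then δ ⟨i, h⟩ else 0) * (s+1)^i

lemma geom_aux (s : ℕ) : ∀ k, ∑ i ∈ Finset.range k, s * (s+1)^i = (s+1)^k - 1 := by
  intro k
  induction k with
  | zero => simp
  | succ k ih =>
      rw [Finset.sum_range_succ, ih, pow_succ]
      have h1 : 1 ≤ (s+1)^k := Nat.one_le_pow _ _ (Nat.succ_pos s)
      rw [mul_add, mul_one, mul_comm ((s+1)^k) s]
      omega

lemma mu_lt {s : ℕ} {a b : Mon n} (ha : ∀ i, a i ≤ s)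
    (i₀ : Fin (n+1)) (h0 : a i₀ < b i₀) (hgt : ∀ j, i₀ < j → a j = b j) :
    mu s a < mu s b := by
  classical
  unfold mu
  have hi₀ : (i₀ : ℕ) + 1 ≤ n + 1 := i₀.2
  rw [Finset.range_eq_Ico, ← Finset.sum_Ico_consecutive _ (Nat.zero_le ((i₀ : ℕ) + 1)) hi₀,
    ← Finset.sum_Ico_consecutive _ (Nat.zero_le ((i₀ : ℕ) + 1)) hi₀]
  have htail : ∑ i ∈ Finset.Ico ((i₀ : ℕ)+1) (n+1), (if h : i < n+1 then a ⟨i, h⟩ else 0) * (s+1)^i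
      = ∑ i ∈ Finset.Ico ((i₀ : ℕ)+1) (n+1), (if h : i < n+1 then b ⟨i, h⟩ else 0) * (s+1)^i := by
    refine Finset.sum_congr rfl fun i hi => ?_
    obtain ⟨h1, h2⟩ := Finset.mem_Ico.mp hi
    rw [dif_pos h2, dif_pos h2, hgt ⟨i, h2⟩ (by simpa [Fin.lt_def] using h1)]
  rw [htail]
  have hhead : ∑ i ∈ Finset.Ico 0 ((i₀ : ℕ)+1), (if h : i < n+1 then a ⟨i, h⟩ else 0) * (s+1)^i
      < ∑ i ∈ Finset.Ico 0 ((i₀ : ℕ)+1), (if h : i < n+1 then b ⟨i, h⟩ else 0) * (s+1)^i := by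
    rw [← Finset.range_eq_Ico, Finset.sum_range_succ,
      Finset.sum_range_succ]
    have hbound : ∑ i ∈ Finset.range (i₀ : ℕ), (if h : i < n+1 then a ⟨i, h⟩ else 0) * (s+1)^i
        ≤ (s+1)^(i₀ : ℕ) - 1 := by
      rw [← geom_aux s (i₀ : ℕ)]
      refine Finset.sum_le_sum fun i _ => ?_
      refine Nat.mul_le_mul_right _ ?_
      split
      · exact ha _
      · exact Nat.zero_le _
    have h2 : (if h : (i₀ : ℕ) < n+1 then a ⟨(i₀ : ℕ), h⟩ else 0) = a i₀ := by
      rw [dif_pos i₀.2]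
    have h3 : (if h : (i₀ : ℕ) < n+1 then b ⟨(i₀ : ℕ), h⟩ else 0) = b i₀ := by
      rw [dif_pos i₀.2]
    rw [h2, h3]
    have hP : 1 ≤ (s+1)^(i₀ : ℕ) := Nat.one_le_pow _ _ (Nat.succ_pos s)
    have hb : (a i₀ + 1) * (s+1)^(i₀ : ℕ) ≤ b i₀ * (s+1)^(i₀ : ℕ) :=
      Nat.mul_le_mul_right _ h0
    have hlast : ∑ i ∈ Finset.range (i₀ : ℕ), (if h : i < n+1 then b ⟨i, h⟩ else 0) * (s+1)^i
        ≥ 0 := Nat.zero_le _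
    rw [add_mul, one_mul] at hb
    omega
  omega

end StmtAux
namespace StmtAux
open MarkedFamilies Finsupp

variable {n : ℕ} {J : Set (Mon n)}

lemma mdeg_single (m : Fin (n+1)) : mdeg (Finsupp.single m 1) = 1 := by
  rw [mdeg, Finsupp.sum_single_index]; rfl

lemma decomp_exists (hJ : IsStronglyStable J) {η : Mon n} (hη : η ∈ J) :
    ∃ α δ : Mon n, α ∈ minGens J ∧ minGeMax α δ ∧ α + δ = η := by
  classical
  have H : ∀ k (η : Mon n), mdeg η = k → η ∈ J →
      ∃ α δ : Mon n, α ∈ minGens J ∧ minGeMax α δ ∧ α + δ = η := by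
    intro k
    induction k using Nat.strong_induction_on with
    | _ k ih =>
      intro η hk hη
      by_cases hne : η.support.Nonempty
      · set m := η.support.min' hne with hmdef
        have hm : m ∈ η.support := η.support.min'_mem hne
        have hmne : η m ≠ 0 := Finsupp.mem_support_iff.mp hm
        by_cases hsub : η - Finsupp.single m 1 ∈ J
        · have hle : Finsupp.single m 1 ≤ η := by
            rw [Finsupp.single_le_iff]; omega
          have heq : (η - Finsupp.single m 1) + Finsupp.single m 1 = η :=
            tsub_add_cancel_of_le hle
          have hdeg : mdeg (η - Finsupp.single m 1) < k := by
            have := mdeg_add (η - Finsupp.single m 1) (Finsupp.single m 1)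
            rw [heq, hk, mdeg_single] at this
            omega
          obtain ⟨α, δ₁, hαg, hmg, he⟩ := ih _ hdeg _ rfl hsub
          refine ⟨α, δ₁ + Finsupp.single m 1, hαg, ?_, by rw [← add_assoc, he, heq]⟩
          intro i hi j hj
          rcases Finset.mem_union.mp (Finsupp.support_add hj) with hj1 | hj2
          · exact hmg i hi j hj1
          · have hjm : j = m := by
              have := Finsupp.support_single_subset hj2
              simpa using this
            subst hjm
            have hiα : α i ≠ 0 := Finsupp.mem_support_iff.mp hi
            have hαle : α i ≤ η i := by
              have h1 : α i + δ₁ i ≤ η i := by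
                have := congrArg (fun f => f i) he
                simp only [Finsupp.add_apply] at this
                have h2 : ((η - Finsupp.single m 1 : Mon n)) i ≤ η i := by
                  rw [Finsupp.tsub_apply]; omega
                omega
              omega
            exact Finset.min'_le _ i (Finsupp.mem_support_iff.mpr (by omega))
        · refine ⟨η, 0, ⟨hη, ?_⟩, ?_, add_zero η⟩
          · intro j hj hjJ
            have hjm : m ≤ j := Finset.min'_le _ j (Finsupp.mem_support_iff.mpr hj)
            rcases eq_or_lt_of_le hjm with heq | hlt
            · rw [← heq] at hjJ; exact hsub hjJ
            · have hmne' : ((η - Finsupp.single j 1 : Mon n)) m ≠ 0 := by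
                have hmj : m ≠ j := ne_of_lt hlt
                rw [Finsupp.tsub_apply, Finsupp.single_apply, if_neg (Ne.symm hmj)]
                omega
              have hstep := hJ.2 _ hjJ m hmne' j hlt
              have hrw : (η - Finsupp.single j 1) - Finsupp.single m 1 + Finsupp.single j 1
                  = η - Finsupp.single m 1 := by
                have hmj : m ≠ j := ne_of_lt hlt
                ext i
                simp only [Finsupp.add_apply, Finsupp.tsub_apply, Finsupp.single_apply]
                rcases eq_or_ne j i with rfl | hji
                · rw [if_pos rfl, if_neg (by exact fun h => hmj h)]
                  omega
                · rw [if_neg hji]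
                  omega
              rw [hrw] at hstep
              exact hsub hstep
          · intro i hi j hj
            simp at hj
      · rw [Finset.not_nonempty_iff_eq_empty, Finsupp.support_eq_empty] at hne
        refine ⟨η, 0, ⟨hη, ?_⟩, ?_, add_zero η⟩
        · intro j hj
          rw [hne] at hj; simp at hj
        · intro i hi j hj
          simp at hj
  exact H _ η rfl hη

lemma decomp_size {α δ α' δ' : Mon n} (h1 : minGeMax α δ) (h2 : minGeMax α' δ')
    (he : α + δ = α' + δ') {v : Fin (n+1)} (hv : α' v < α v) : mdeg α' < mdeg α := by
  classical
  have hev : ∀ i, α i + δ i = α' i + δ' i := fun i => by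
    have := congrArg (fun f => f i) he
    simpa using this
  have hαv : α v ≠ 0 := by omega
  have hδ'v : δ' v ≠ 0 := by have := hev v; omega
  have hsuppα : ∀ i, α' i ≠ 0 → v ≤ i := fun i hi =>
    h2 i (Finsupp.mem_support_iff.mpr hi) v (Finsupp.mem_support_iff.mpr hδ'v)
  have hδ : ∀ j, δ j ≠ 0 → j ≤ v := fun j hj =>
    h1 v (Finsupp.mem_support_iff.mpr hαv) j (Finsupp.mem_support_iff.mpr hj)
  have hvT : v ∈ Finset.univ.filter (fun i : Fin (n+1) => ¬ v < i) := by simp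
  have e1 : mdeg α' = (∑ i ∈ Finset.univ.filter (fun i : Fin (n+1) => v < i), α' i)
      + ∑ i ∈ Finset.univ.filter (fun i : Fin (n+1) => ¬ v < i), α' i := by
    rw [mdeg_eq_sum]; exact (Finset.sum_filter_add_sum_filter_not _ _ _).symm
  have e2 : mdeg α = (∑ i ∈ Finset.univ.filter (fun i : Fin (n+1) => v < i), α i)
      + ∑ i ∈ Finset.univ.filter (fun i : Fin (n+1) => ¬ v < i), α i := by
    rw [mdeg_eq_sum]; exact (Finset.sum_filter_add_sum_filter_not _ _ _).symm
  have e3 : ∑ i ∈ Finset.univ.filter (fun i : Fin (n+1) => ¬ v < i), α' i = α' v := by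
    refine Finset.sum_eq_single_of_mem v hvT fun i hi hne => ?_
    by_contra h0
    have hvi := hsuppα i h0
    have hnv : ¬ v < i := (Finset.mem_filter.mp hi).2
    exact hne (le_antisymm (not_lt.mp hnv) hvi)
  have e4 : α v ≤ ∑ i ∈ Finset.univ.filter (fun i : Fin (n+1) => ¬ v < i), α i :=
    Finset.single_le_sum (fun _ _ => Nat.zero_le _) hvT
  have e5 : ∑ i ∈ Finset.univ.filter (fun i : Fin (n+1) => v < i), α' i
      ≤ ∑ i ∈ Finset.univ.filter (fun i : Fin (n+1) => v < i), α i := by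
    refine Finset.sum_le_sum fun i hi => ?_
    have hvi : v < i := (Finset.mem_filter.mp hi).2
    have hδi : δ i = 0 := by
      by_contra h0
      exact absurd hvi (not_lt.mpr (hδ i h0))
    have := hev i
    omega
  omega

lemma decomp_unique (hJ : IsStronglyStable J) {α δ α' δ' : Mon n}
    (hα : α ∈ minGens J) (hα' : α' ∈ minGens J) (h1 : minGeMax α δ) (h2 : minGeMax α' δ')
    (he : α + δ = α' + δ') : α = α' ∧ δ = δ' := by
  have hdvd : ∀ (a b : Mon n), a ∈ J → b ∈ minGens J → (∀ i, a i ≤ b i) → a ≠ b → False := by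
    intro a b haJ hb hle hab
    have hex : ∃ j, a j < b j := by
      by_contra h; push_neg at h
      exact hab (Finsupp.ext fun i => le_antisymm (hle i) (h i))
    obtain ⟨j, hj⟩ := hex
    have hbj : b j ≠ 0 := by omega
    refine hb.2 j hbj ?_
    have hrw : b - Finsupp.single j 1 = a + ((b - a) - Finsupp.single j 1) := by
      ext i
      simp only [Finsupp.add_apply, Finsupp.tsub_apply, Finsupp.single_apply]
      rcases eq_or_ne j i with rfl | hji
      · rw [if_pos rfl]
        have := hle j
        omega
      · rw [if_neg hji]
        have := hle i
        omega
    rw [hrw]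
    exact hJ.1 a haJ _
  have main : α = α' := by
    by_contra hne
    by_cases hc : ∀ u, α u ≤ α' u
    · exact hdvd α α' hα.1 hα' hc hne
    · push_neg at hc; obtain ⟨v, hv⟩ := hc
      by_cases hc' : ∀ u, α' u ≤ α u
      · exact hdvd α' α hα'.1 hα hc' (Ne.symm hne)
      · push_neg at hc'; obtain ⟨u, hu⟩ := hc'
        have g1 := decomp_size h1 h2 he hv
        have g2 := decomp_size h2 h1 he.symm hu
        omega
  rw [main] at he
  exact ⟨main, add_left_cancel he⟩

lemma key2 (hJ : IsStronglyStable J) {δ β δ'' α'' : Mon n}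
    (hβ : β ∉ J) (hα'' : α'' ∈ J) (hm : minGeMax α'' δ'')
    (hd : δ'' + α'' = δ + β) :
    ∃ i₀ : Fin (n+1), δ'' i₀ < δ i₀ ∧ ∀ j, i₀ < j → δ'' j = δ j := by
  classical
  have hev : ∀ i, δ'' i + α'' i = δ i + β i := fun i => by
    have := congrArg (fun f => f i) hd
    simpa using this
  have hne : δ'' ≠ δ := by
    rintro rfl
    have hab : α'' = β := by ext i; have := hev i; omega
    exact hβ (hab ▸ hα'')
  have hSne : (Finset.univ.filter (fun i : Fin (n+1) => δ'' i ≠ δ i)).Nonempty := by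
    by_contra h
    rw [Finset.not_nonempty_iff_eq_empty] at h
    refine hne (Finsupp.ext fun i => ?_)
    by_contra h0
    have hmem : i ∈ Finset.univ.filter (fun i : Fin (n+1) => δ'' i ≠ δ i) :=
      Finset.mem_filter.mpr ⟨Finset.mem_univ _, h0⟩
    rw [h] at hmem
    simp at hmem
  set i₀ := (Finset.univ.filter (fun i : Fin (n+1) => δ'' i ≠ δ i)).max' hSne with hi₀def
  have hi₀mem := (Finset.univ.filter (fun i : Fin (n+1) => δ'' i ≠ δ i)).max'_mem hSne
  have hi₀ : δ'' i₀ ≠ δ i₀ := (Finset.mem_filter.mp hi₀mem).2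
  have hmax : ∀ j, i₀ < j → δ'' j = δ j := by
    intro j hj
    by_contra h0
    have hmem : j ∈ Finset.univ.filter (fun i : Fin (n+1) => δ'' i ≠ δ i) :=
      Finset.mem_filter.mpr ⟨Finset.mem_univ _, h0⟩
    exact absurd hj (not_lt.mpr (Finset.le_max' _ j hmem))
  refine ⟨i₀, ?_, hmax⟩
  rcases lt_or_gt_of_ne hi₀ with h | h
  · exact h
  exfalso
  have hδ''i₀ : δ'' i₀ ≠ 0 := by omega
  have hge : ∀ i, α'' i ≠ 0 → i₀ ≤ i := fun i hi =>
    hm i (Finsupp.mem_support_iff.mpr hi) i₀ (Finsupp.mem_support_iff.mpr hδ''i₀)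
  have hle : ∀ i, α'' i ≤ β i := by
    intro i
    by_cases h0 : α'' i = 0
    · omega
    · have hi := hge i h0
      rcases eq_or_lt_of_le hi with heq | hlt
      · have e := hev i
        have h2 : δ i < δ'' i := by rw [← heq]; exact h
        omega
      · have e := hev i
        have h2 : δ'' i = δ i := hmax i hlt
        omega
  have hrw : β = α'' + (β - α'') := by
    ext i
    simp only [Finsupp.add_apply, Finsupp.tsub_apply]
    have := hle i
    omega
  exact hβ (hrw ▸ hJ.1 α'' hα'' (β - α''))

end StmtAux
namespace StmtAux
open MarkedFamilies Finsupp MvPolynomial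

variable {n : ℕ} {J : Set (Mon n)} {A : Type*} [CommRing A]
variable {F : Mon n → MvPolynomial (Fin (n + 1)) A}

lemma degree_eq_mdeg (d : Mon n) : d.degree = mdeg d := by
  rw [Finsupp.degree_eq_weight_one]; exact weight_one_eq_mdeg d

lemma marked_homog (hF : IsMarkedSet J F) {α : Mon n} (hα : α ∈ minGens J) :
    (F α).IsHomogeneous (mdeg α) := by
  intro d hd
  rw [weight_one_eq_mdeg]
  rcases eq_or_ne d α with rfl | hne
  · rfl
  · exact ((hF α hα).2 d (MvPolynomial.mem_support_iff.mpr hd) hne).2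

lemma monomial_mul_eq_sum (δ : Mon n) (p : MvPolynomial (Fin (n+1)) A) :
    monomial δ (1:A) * p = ∑ β ∈ p.support, p.coeff β • monomial (δ + β) (1:A) := by
  conv_lhs => rw [p.as_sum]
  rw [Finset.mul_sum]
  refine Finset.sum_congr rfl fun β hβ => ?_
  rw [monomial_mul, smul_monomial, one_mul, smul_eq_mul, mul_one]

lemma nSpan_coeff_eq_zero {q : MvPolynomial (Fin (n+1)) A} (hq : q ∈ nSpan A J)
    {γ : Mon n} (hγ : γ ∈ J) : q.coeff γ = 0 := by
  refine Submodule.span_induction ?_ ?_ ?_ ?_ hq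
  · rintro x ⟨β, hβ, rfl⟩
    rw [coeff_monomial, if_neg]
    rintro rfl
    exact hβ hγ
  · simp
  · intro x y _ _ hx hy
    rw [coeff_add, hx, hy, add_zero]
  · intro a x _ hx
    rw [coeff_smul, hx, smul_zero]

lemma monomial_reduce (hJ : IsStronglyStable J) (hF : IsMarkedSet J F) (s : ℕ) :
    ∀ k : ℕ, ∀ η ∈ J, mdeg η = s → ∀ α δ : Mon n, α ∈ minGens J → minGeMax α δ →
      α + δ = η → mu s δ ≤ k →
      monomial η (1:A) ∈ Submodule.span A (FSet J F s) ⊔ nSpan A J := by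
  intro k
  induction k using Nat.strong_induction_on with
  | _ k ih =>
    intro η hη hdeg α δ hα hmm he hmu
    have hsum : mdeg α + mdeg δ = s := by rw [← hdeg, ← he, mdeg_add]
    have hFs : monomial δ (1:A) * F α ∈ Submodule.span A (FSet J F s) :=
      Submodule.subset_span ⟨α, δ, hα, hsum, hmm, rfl⟩
    have hid : monomial η (1:A) = monomial δ (1:A) * F α
        - ∑ β ∈ (F α).support.erase α, (F α).coeff β • monomial (δ + β) (1:A) := by
      rw [monomial_mul_eq_sum]
      by_cases hmem : α ∈ (F α).support
      · rw [← Finset.add_sum_erase _ _ hmem, (hF α hα).1, one_smul]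
        have hδα : δ + α = η := by rw [← he, add_comm]
        rw [hδα, add_sub_cancel_right]
      · have h10 : (1:A) = 0 := by
          rw [← (hF α hα).1]
          exact MvPolynomial.notMem_support_iff.mp hmem
        haveI : Subsingleton A := subsingleton_of_zero_eq_one h10.symm
        exact MvPolynomial.ext _ _ fun d => Subsingleton.elim _ _
    rw [hid]
    refine Submodule.sub_mem _ (Submodule.mem_sup_left hFs) (Submodule.sum_mem _ ?_)
    intro β hβ
    have hβ' := Finset.mem_of_mem_erase hβ
    have hβne := Finset.ne_of_mem_erase hβ
    obtain ⟨hβJ, hβdeg⟩ := (hF α hα).2 β hβ' hβne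
    refine Submodule.smul_mem _ _ ?_
    have hdeg' : mdeg (δ + β) = s := by rw [mdeg_add]; omega
    by_cases hin : δ + β ∈ J
    · obtain ⟨α₁, δ₁, hα₁, hm₁, he₁⟩ := decomp_exists hJ hin
      have hd : δ₁ + α₁ = δ + β := by rw [add_comm, he₁]
      obtain ⟨i₀, hlt, hup⟩ := key2 hJ hβJ hα₁.1 hm₁ hd
      have hδ₁le : ∀ i, δ₁ i ≤ s := by
        intro i
        have h1 : δ₁ i ≤ mdeg δ₁ := apply_le_mdeg _ _
        have h2 := congrArg mdeg he₁
        rw [mdeg_add, mdeg_add] at h2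
        omega
      have hmullt : mu s δ₁ < mu s δ := mu_lt hδ₁le i₀ hlt hup
      exact ih (mu s δ₁) (lt_of_lt_of_le hmullt hmu) (δ + β) hin hdeg' α₁ δ₁ hα₁ hm₁ he₁ le_rfl
    · exact Submodule.mem_sup_right (Submodule.subset_span ⟨δ + β, hin, rfl⟩)

lemma mult_reduce (hJ : IsStronglyStable J) (hF : IsMarkedSet J F) {s : ℕ} {α : Mon n}
    (hα : α ∈ minGens J) (δ : Mon n) (hsum : mdeg α + mdeg δ = s) :
    monomial δ (1:A) * F α ∈ Submodule.span A (FSet J F s) ⊔ nSpan A J := by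
  rw [monomial_mul_eq_sum]
  refine Submodule.sum_mem _ fun β hβ => Submodule.smul_mem _ _ ?_
  have hβdeg : mdeg β = mdeg α := by
    rcases eq_or_ne β α with rfl | hne
    · rfl
    · exact ((hF α hα).2 β hβ hne).2
  have hdeg : mdeg (δ + β) = s := by rw [mdeg_add]; omega
  by_cases hin : δ + β ∈ J
  · obtain ⟨α₁, δ₁, hα₁, hm₁, he₁⟩ := decomp_exists hJ hin
    exact monomial_reduce hJ hF s (mu s δ₁) (δ + β) hin hdeg α₁ δ₁ hα₁ hm₁ he₁ le_rfl
  · exact Submodule.mem_sup_right (Submodule.subset_span ⟨δ + β, hin, rfl⟩)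

end StmtAux
namespace StmtAux
open MarkedFamilies Finsupp MvPolynomial

variable {n : ℕ} {J : Set (Mon n)} {A : Type*} [CommRing A]
variable {F : Mon n → MvPolynomial (Fin (n + 1)) A}

lemma FSet_subset_ideal {s : ℕ} :
    FSet J F s ⊆ (Submodule.restrictScalars A (markedIdeal J F) : Set _) := by
  rintro p ⟨α, δ, hα, hd, hm, rfl⟩
  exact Ideal.mul_mem_left _ _ (Ideal.subset_span ⟨α, hα, rfl⟩)

lemma FSet_homog {s : ℕ} (hF : IsMarkedSet J F) :
    FSet J F s ⊆ (homogeneousSubmodule (Fin (n+1)) A s : Set _) := by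
  rintro p ⟨α, δ, hα, hd, hm, rfl⟩
  rw [SetLike.mem_coe, mem_homogeneousSubmodule]
  have h1 : (monomial δ (1:A)).IsHomogeneous (mdeg δ) :=
    isHomogeneous_monomial _ (degree_eq_mdeg δ)
  have h2 := h1.mul (marked_homog hF hα)
  rwa [add_comm (mdeg δ), hd] at h2

lemma homcomp_mul_mem (hJ : IsStronglyStable J) (hF : IsMarkedSet J F) (s : ℕ)
    (g : MvPolynomial (Fin (n+1)) A) {α : Mon n} (hα : α ∈ minGens J) :
    homogeneousComponent s (g * F α) ∈ Submodule.span A (FSet J F s) ⊔ nSpan A J := by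
  have hrep : g * F α = ∑ γ ∈ g.support, coeff γ g • (monomial γ (1:A) * F α) := by
    conv_lhs => rw [g.as_sum, Finset.sum_mul]
    refine Finset.sum_congr rfl fun γ _ => ?_
    rw [← smul_mul_assoc, smul_monomial, smul_eq_mul, mul_one]
  rw [hrep, map_sum]
  refine Submodule.sum_mem _ fun γ _ => ?_
  rw [LinearMap.map_smul]
  refine Submodule.smul_mem _ _ ?_
  have hmem : monomial γ (1:A) * F α ∈ homogeneousSubmodule (Fin (n+1)) A (mdeg γ + mdeg α) := by
    rw [mem_homogeneousSubmodule]
    exact (isHomogeneous_monomial _ (degree_eq_mdeg γ)).mul (marked_homog hF hα)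
  rw [homogeneousComponent_of_mem hmem]
  split_ifs with hs
  · exact mult_reduce hJ hF hα γ (by omega)
  · exact Submodule.zero_mem _

end StmtAux

open MvPolynomial MarkedFamilies StmtAux in
theorem stmt_6_aux {n : ℕ} {A : Type*} [CommRing A] [IsNoetherianRing A]
    (J : Set (Mon n)) (hJ : IsStronglyStable J)
    (F : Mon n → MvPolynomial (Fin (n + 1)) A) (hF : IsMarkedSet J F) (s : ℕ) :
    idealDeg A (markedIdeal J F) s
        = Submodule.span A (FSet J F s) ⊔
            ((Submodule.restrictScalars A (markedIdeal J F) ⊓ nSpan A J)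
              ⊓ homogeneousSubmodule (Fin (n + 1)) A s) ∧
    Submodule.span A (FSet J F s) ⊓
        ((Submodule.restrictScalars A (markedIdeal J F) ⊓ nSpan A J)
          ⊓ homogeneousSubmodule (Fin (n + 1)) A s) = ⊥ := by
  classical
  constructor
  · apply le_antisymm
    · intro f hf
      obtain ⟨hfI, hfhom⟩ := Submodule.mem_inf.mp hf
      have hf1 : f ∈ Submodule.span A (FSet J F s) ⊔ nSpan A J := by
        have hfI' : f ∈ Ideal.span (F '' minGens J) := hfI
        obtain ⟨c, hcsupp, hcsum⟩ := Submodule.mem_span_set.mp hfI'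
        have hf_eq : f = homogeneousComponent s f :=
          ((homogeneousComponent_of_mem hfhom).trans (if_pos rfl)).symm
        rw [hf_eq, ← hcsum, Finsupp.sum, map_sum]
        refine Submodule.sum_mem _ fun p hp => ?_
        obtain ⟨α, hα, rfl⟩ := hcsupp hp
        rw [smul_eq_mul]
        exact homcomp_mul_mem hJ hF s (c (F α)) hα
      obtain ⟨p, hp, q, hq, rfl⟩ := Submodule.mem_sup.mp hf1
      refine Submodule.mem_sup.mpr ⟨p, hp, q, ?_, rfl⟩
      have hpI : p ∈ Submodule.restrictScalars A (markedIdeal J F) :=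
        (Submodule.span_le.mpr FSet_subset_ideal) hp
      have hphom : p ∈ homogeneousSubmodule (Fin (n+1)) A s :=
        (Submodule.span_le.mpr (FSet_homog hF)) hp
      refine Submodule.mem_inf.mpr ⟨Submodule.mem_inf.mpr ⟨?_, hq⟩, ?_⟩
      · have := Submodule.sub_mem _ hfI hpI
        simpa using this
      · have := Submodule.sub_mem _ hfhom hphom
        simpa using this
    · refine sup_le ?_ ?_
      · refine Submodule.span_le.mpr fun p hp => ?_
        exact Submodule.mem_inf.mpr ⟨FSet_subset_ideal hp, FSet_homog hF hp⟩
      · exact le_inf (inf_le_left.trans inf_le_left) inf_le_right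
  · rw [eq_bot_iff]
    intro g hg
    obtain ⟨hg1, hg2'⟩ := Submodule.mem_inf.mp hg
    have hg2 : g ∈ nSpan A J := (Submodule.mem_inf.mp (Submodule.mem_inf.mp hg2').1).2
    rw [Submodule.mem_bot]
    obtain ⟨c, hcsupp, hcsum⟩ := Submodule.mem_span_set.mp hg1
    by_cases hne : c.support.Nonempty
    · exfalso
      have hdata : ∀ p ∈ c.support, ∃ αδ : Mon n × Mon n, αδ.1 ∈ minGens J ∧
          mdeg αδ.1 + mdeg αδ.2 = s ∧ minGeMax αδ.1 αδ.2 ∧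
          p = monomial αδ.2 (1:A) * F αδ.1 := by
        intro p hp
        obtain ⟨α, δ, h1, h2, h3, h4⟩ := hcsupp hp
        exact ⟨(α, δ), h1, h2, h3, h4⟩
      choose dat hdat1 hdat2 hdat3 hdat4 using hdata
      obtain ⟨p₀, hp₀a, hmax⟩ := Finset.exists_max_image c.support.attach
        (fun p => mu s (dat p.1 p.2).2) (Finset.attach_nonempty_iff.mpr hne)
      set α₀ := (dat p₀.1 p₀.2).1 with hα₀def
      set δ₀ := (dat p₀.1 p₀.2).2 with hδ₀def
      set η₀ := α₀ + δ₀ with hη₀def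
      have hη₀J : η₀ ∈ J := hJ.1 α₀ (hdat1 p₀.1 p₀.2).1 δ₀
      have hterm : ∀ p (hp : p ∈ c.support), p ≠ p₀.1 → coeff η₀ p = 0 := by
        intro p hp hpne
        by_contra h0
        have hrep := hdat4 p hp
        set αp := (dat p hp).1 with hαpdef
        set δp := (dat p hp).2 with hδpdef
        rw [hrep, coeff_monomial_mul'] at h0
        split_ifs at h0 with hle
        · rw [one_mul] at h0
          set β := η₀ - δp with hβdef
          have hηeq : δp + β = η₀ := add_tsub_cancel_of_le hle
          rcases eq_or_ne β αp with hba | hba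
          · have heq : α₀ + δ₀ = αp + δp := by
              rw [← hη₀def, ← hηeq, hba, add_comm]
            obtain ⟨e1, e2⟩ := decomp_unique hJ (hdat1 p₀.1 p₀.2) (hdat1 p hp)
              (hdat3 p₀.1 p₀.2) (hdat3 p hp) heq
            refine hpne (hrep.trans ?_)
            rw [hδpdef, hαpdef, ← e2, ← e1]
            exact (hdat4 p₀.1 p₀.2).symm
          · have hβmem : β ∈ (F αp).support := MvPolynomial.mem_support_iff.mpr h0
            obtain ⟨hβJ, hβdeg⟩ := (hF αp (hdat1 p hp)).2 β hβmem hba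
            have hd : δ₀ + α₀ = δp + β := by rw [add_comm, ← hη₀def, hηeq]
            obtain ⟨i₀, hlt, hup⟩ := key2 hJ hβJ (hdat1 p₀.1 p₀.2).1 (hdat3 p₀.1 p₀.2) hd
            have hδ₀le : ∀ i, δ₀ i ≤ s := fun i => le_trans (apply_le_mdeg _ _)
              (by have h := hdat2 p₀.1 p₀.2; rw [← hα₀def, ← hδ₀def] at h; omega)
            have hmulemma := mu_lt hδ₀le i₀ hlt hup
            have hmax' := hmax ⟨p, hp⟩ (Finset.mem_attach _ _)
            rw [← hδpdef] at hmax'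
            omega
        · exact h0 rfl
      have hp₀coeff : coeff η₀ p₀.1 = 1 := by
        rw [hdat4 p₀.1 p₀.2, ← hα₀def, ← hδ₀def, coeff_monomial_mul']
        have hle : δ₀ ≤ η₀ := le_add_self
        rw [if_pos hle, one_mul]
        have hsub : η₀ - δ₀ = α₀ := by rw [hη₀def]; exact add_tsub_cancel_right _ _
        rw [hsub, (hF α₀ (hdat1 p₀.1 p₀.2)).1]
      have hzero : coeff η₀ g = 0 := nSpan_coeff_eq_zero hg2 hη₀J
      have hval : coeff η₀ g = c p₀.1 := by
        rw [← hcsum, Finsupp.sum, coeff_sum]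
        rw [Finset.sum_eq_single_of_mem p₀.1 p₀.2
          (fun b hb hbne => by rw [coeff_smul, hterm b hb hbne, smul_zero])]
        rw [coeff_smul, hp₀coeff, smul_eq_mul, mul_one]
      exact (Finsupp.mem_support_iff.mp p₀.2) (by rw [← hval, hzero])
    · rw [Finset.not_nonempty_iff_eq_empty] at hne
      rw [← hcsum, Finsupp.sum, hne, Finset.sum_empty]
end
open MvPolynomial MarkedFamilies in
/-- `I_s = ⟨F_J^{(s)}⟩ ⊕ N(J,I)_s`, where `N(J,I) = I ∩ ⟨N(J)⟩`. -/
theorem stmt_6 {n : ℕ} {A : Type*} [CommRing A] [IsNoetherianRing A]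
    (J : Set (Mon n)) (hJ : IsStronglyStable J)
    (F : Mon n → MvPolynomial (Fin (n + 1)) A) (hF : IsMarkedSet J F) (s : ℕ) :
    idealDeg A (markedIdeal J F) s
        = Submodule.span A (FSet J F s) ⊔
            ((Submodule.restrictScalars A (markedIdeal J F) ⊓ nSpan A J)
              ⊓ homogeneousSubmodule (Fin (n + 1)) A s) ∧
    Submodule.span A (FSet J F s) ⊓
        ((Submodule.restrictScalars A (markedIdeal J F) ⊓ nSpan A J)
          ⊓ homogeneousSubmodule (Fin (n + 1)) A s) = ⊥ := by
  exact stmt_6_aux J hJ F hF s
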